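/- If the attack relation of a topological argumentation model is transitive, then the grounded extension LFP_τ is closed under (binary) intersections. -/
import Mathlib


variable {X : Type*} [TopologicalSpace X]

/-- The set of opens defended by the family `T` of opens
(`atk t t'` reads "t' attacks t"). -/
def defends (atk : Set X → Set X → Prop) (T : Set (Set X)) : Set (Set X) :=
  {t | IsOpen t ∧ ∀ t', IsOpen t' → atk t t' → ∃ t'' ∈ T, atk t' t''}

/-- The grounded extension `LFP_τ`: the least fixed point of the defense
function, constructed as the intersection of all prefixed points. -/
def groundedExt (atk : Set X → Set X → Prop) : Set (Set X) :=
  ⋂₀ {T : Set (Set X) | defends atk T ⊆ T}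

/-- Grounded belief: some member of the grounded extension supports `P`. -/
def GroundedBelief (atk : Set X → Set X → Prop) (P : Set X) : Prop :=
  ∃ f ∈ groundedExt atk, f ⊆ P

lemma defends_mono (atk : Set X → Set X → Prop) {T T' : Set (Set X)} (h : T ⊆ T') :
    defends atk T ⊆ defends atk T' := by
  rintro t ⟨ht, hd⟩
  exact ⟨ht, fun t' ht' ha => (hd t' ht' ha).imp fun w ⟨hw, hwa⟩ => ⟨h hw, hwa⟩⟩

lemma groundedExt_isOpen (atk : Set X → Set X → Prop) {f : Set X}
    (hf : f ∈ groundedExt atk) : IsOpen f :=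
  hf {t | IsOpen t} (fun _ ht => ht.1)

lemma defends_groundedExt_subset (atk : Set X → Set X → Prop) :
    defends atk (groundedExt atk) ⊆ groundedExt atk := by
  intro t ht T hT
  exact hT (defends_mono atk (fun u hu => Set.mem_sInter.mp hu T hT) ht)

lemma groundedExt_subset_defends (atk : Set X → Set X → Prop) :
    groundedExt atk ⊆ defends atk (groundedExt atk) := fun t ht =>
  ht (defends atk (groundedExt atk))
    (defends_mono atk (defends_groundedExt_subset atk))

lemma groundedExt_conflictFree (atk : Set X → Set X → Prop) :
    ∀ a ∈ groundedExt atk, ∀ b ∈ groundedExt atk, ¬ atk a b := by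
  have key : groundedExt atk ⊆
      {t | t ∈ groundedExt atk ∧ ∀ s ∈ groundedExt atk, ¬ atk t s} := by
    intro t ht
    apply Set.mem_sInter.mp ht
    rintro u ⟨hu, hd⟩
    have huG : u ∈ groundedExt atk := by
      apply defends_groundedExt_subset atk
      exact defends_mono atk (fun x hx => hx.1) ⟨hu, hd⟩
    refine ⟨huG, fun s hs hatk => ?_⟩
    obtain ⟨w, ⟨hwG, hwS⟩, hws⟩ := hd s (groundedExt_isOpen atk hs) hatk
    obtain ⟨_, hsd⟩ := groundedExt_subset_defends atk hs
    obtain ⟨v, hvG, _⟩ := hsd w (groundedExt_isOpen atk hwG) hws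
    exact hwS v hvG ‹atk w v›
  exact fun a ha b hb => (key ha).2 b hb

/-- If the attack relation is transitive, the grounded extension is closed
under binary intersections. -/
theorem groundedExt_inter_of_transitive (atk : Set X → Set X → Prop)
    (h1 : ∀ t₁ t₂ : Set X, IsOpen t₁ → IsOpen t₂ → (t₁ ∩ t₂ = ∅ ↔ atk t₁ t₂ ∨ atk t₂ t₁))
    (h2 : ∀ t t₁ t₁' : Set X, IsOpen t → IsOpen t₁ → IsOpen t₁' → atk t₁ t → t₁' ⊆ t₁ → atk t₁' t)
    (h3 : ∀ t : Set X, IsOpen t → t ≠ ∅ → atk ∅ t ∧ ¬ atk t ∅)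
    (htrans : ∀ t₁ t₂ t₃ : Set X, IsOpen t₁ → IsOpen t₂ → IsOpen t₃ →
      atk t₁ t₂ → atk t₂ t₃ → atk t₁ t₃) :
    ∀ f₁ f₂ : Set X, f₁ ∈ groundedExt atk → f₂ ∈ groundedExt atk →
      f₁ ∩ f₂ ∈ groundedExt atk := by
  intro f₁ f₂ hf₁ hf₂
  have o₁ := groundedExt_isOpen atk hf₁
  have o₂ := groundedExt_isOpen atk hf₂
  have cf := groundedExt_conflictFree atk
  obtain ⟨_, hd₁⟩ := groundedExt_subset_defends atk hf₁
  obtain ⟨_, hd₂⟩ := groundedExt_subset_defends atk hf₂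
  apply defends_groundedExt_subset atk
  refine ⟨o₁.inter o₂, fun t' ht' hatk => ?_⟩
  -- t' attacks f₁ ∩ f₂, hence is disjoint from it
  have hdisj : (f₁ ∩ f₂) ∩ t' = ∅ :=
    (h1 (f₁ ∩ f₂) t' (o₁.inter o₂) ht').mpr (Or.inl hatk)
  by_cases hA : t' ∩ f₁ = ∅
  · rcases (h1 t' f₁ ht' o₁).mp hA with h | h
    · exact ⟨f₁, hf₁, h⟩
    · exact hd₁ t' ht' h
  · by_cases hB : t' ∩ f₂ = ∅
    · rcases (h1 t' f₂ ht' o₂).mp hB with h | h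
      · exact ⟨f₂, hf₂, h⟩
      · exact hd₂ t' ht' h
    · -- both intersections nonempty: derive a contradiction
      exfalso
      set s := t' ∩ f₁ with hs
      set r := t' ∩ f₂ with hr
      have os : IsOpen s := ht'.inter o₁
      have orr : IsOpen r := ht'.inter o₂
      have hsf₂ : s ∩ f₂ = ∅ := by
        rw [Set.eq_empty_iff_forall_notMem] at hdisj ⊢
        intro x hx
        exact hdisj x ⟨⟨hx.1.2, hx.2⟩, hx.1.1⟩
      have hrf₁ : r ∩ f₁ = ∅ := by
        rw [Set.eq_empty_iff_forall_notMem] at hdisj ⊢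
        intro x hx
        exact hdisj x ⟨⟨hx.2, hx.1.2⟩, hx.1.1⟩
      have hsr : s ∩ r = ∅ := by
        rw [Set.eq_empty_iff_forall_notMem] at hdisj ⊢
        intro x hx
        exact hdisj x ⟨⟨hx.1.2, hx.2.2⟩, hx.1.1⟩
      rcases (h1 s f₂ os o₂).mp hsf₂ with hsf | hfs
      · -- f₂ attacks s
        rcases (h1 r f₁ orr o₁).mp hrf₁ with hrf | hfr
        · -- f₁ attacks r
          rcases (h1 s r os orr).mp hsr with hsr' | hrs'
          · -- r attacks s : then f₁ attacks s via transitivity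
            have : atk s f₁ := htrans s r f₁ os orr o₁ hsr' hrf
            have : s ∩ f₁ = ∅ := (h1 s f₁ os o₁).mpr (Or.inl this)
            rw [Set.eq_empty_iff_forall_notMem] at this
            obtain ⟨x, hx⟩ := Set.nonempty_iff_ne_empty.mpr hA
            exact this x ⟨hx, hx.2⟩
          · -- s attacks r : then f₂ attacks r via transitivity
            have : atk r f₂ := htrans r s f₂ orr os o₂ hrs' hsf
            have : r ∩ f₂ = ∅ := (h1 r f₂ orr o₂).mpr (Or.inl this)
            rw [Set.eq_empty_iff_forall_notMem] at this
            obtain ⟨x, hx⟩ := Set.nonempty_iff_ne_empty.mpr hB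
            exact this x ⟨hx, hx.2⟩
        · -- r attacks f₁ : defense of f₁ yields w ∈ G attacking r,
          -- transitivity gives w attacking f₁, contradicting conflict-freeness
          obtain ⟨w, hwG, hrw⟩ := hd₁ r orr hfr
          have : atk f₁ w :=
            htrans f₁ r w o₁ orr (groundedExt_isOpen atk hwG) hfr hrw
          exact cf f₁ hf₁ w hwG this
      · -- s attacks f₂ : defense of f₂ yields w ∈ G attacking s,
        -- transitivity gives w attacking f₂, contradicting conflict-freeness
        obtain ⟨w, hwG, hsw⟩ := hd₂ s os hfs
        have : atk f₂ w :=
          htrans f₂ s w o₂ os (groundedExt_isOpen atk hwG) hfs hsw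
        exact cf f₂ hf₂ w hwG this
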